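/- Any real linear combination a·I₂ + b·M + c·N, where M = diag(w, w*) with |w| = 1 and N is the 2×2 matrix with rows (0, x) and (−x*, 0) with |x| = 1, is equal to a nonnegative real scalar multiple of a unitary matrix. Specifically, V·V† = (a² + b² + c² + 2ab·Re(w))·I₂. -/

import Mathlib

open Matrix

theorem stmt3 (a b c : ℝ) (w x : ℂ) (hw : ‖w‖ = 1) (hx : ‖x‖ = 1)
    (V : Matrix (Fin 2) (Fin 2) ℂ)
    (hV : V = (a : ℂ) • 1 + (b : ℂ) • !![w, 0; 0, (starRingEnd ℂ) w]
            + (c : ℂ) • !![0, x; -((starRingEnd ℂ) x), 0]) :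
    V * Vᴴ = (((a ^ 2 + b ^ 2 + c ^ 2 + 2 * a * b * w.re : ℝ) : ℂ)) • 1 ∧
      0 ≤ a ^ 2 + b ^ 2 + c ^ 2 + 2 * a * b * w.re := by
  have hw' : w * (starRingEnd ℂ) w = 1 := by
    rw [Complex.mul_conj]; norm_cast; rw [← Complex.sq_norm, hw]; norm_num
  have hx' : x * (starRingEnd ℂ) x = 1 := by
    rw [Complex.mul_conj]; norm_cast; rw [← Complex.sq_norm, hx]; norm_num
  have hwre : w + (starRingEnd ℂ) w = 2 * w.re := by
    rw [Complex.add_conj]; norm_num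
  have hw2 : w.re^2 + w.im^2 = 1 := by
    have := Complex.normSq_apply w
    rw [Complex.normSq_eq_norm_sq, hw] at this; nlinarith
  have hx2 : x.re^2 + x.im^2 = 1 := by
    have := Complex.normSq_apply x
    rw [Complex.normSq_eq_norm_sq, hx] at this; nlinarith
  constructor
  · subst hV
    ext i j
    fin_cases i <;> fin_cases j <;>
      simp [Matrix.mul_apply, Fin.sum_univ_succ, Matrix.one_apply, Complex.ext_iff,
        mul_comm, pow_two] <;>
      first | rfl | nlinarith [hw2, hx2]
  · have := Complex.abs_re_le_norm w
    rw [hw] at this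
    nlinarith [sq_nonneg (a + b), sq_nonneg (a - b), abs_le.mp this, sq_nonneg c,
      sq_nonneg (a*b)]
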